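/- For any N ≥ 3 and λ ∈ (-1,1), all eigenvalues of the N×N discrete PT-symmetric square-well Hamiltonian H(λ) are real. -/
import Mathlib


open Matrix Polynomial

/-- The N×N discrete PT-symmetric square-well Hamiltonian (0-indexed). -/
noncomputable def Ham (N : ℕ) (l : ℝ) : Matrix (Fin N) (Fin N) ℝ :=
  Matrix.of fun i j =>
    if (i : ℕ) = j then 2
    else if (j : ℕ) = (i : ℕ) + 1 then
      (if (i : ℕ) = 0 then -1 - l else if (j : ℕ) = N - 1 then -1 + l else -1)
    else if (i : ℕ) = (j : ℕ) + 1 then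
      (if (j : ℕ) = 0 then -1 + l else if (i : ℕ) = N - 1 then -1 - l else -1)
    else 0

/-- The diagonal weights of the PT metric. -/
noncomputable def th (N : ℕ) (l : ℝ) (k : ℕ) : ℝ :=
  if k = 0 ∨ k = N - 1 then (1 - l) / (1 + l) else 1

lemma th_pos (N : ℕ) (l : ℝ) (hl : l ∈ Set.Ioo (-1:ℝ) 1) (k : ℕ) : 0 < th N l k := by
  obtain ⟨h1, h2⟩ := hl
  unfold th
  split_ifs
  · exact div_pos (by linarith) (by linarith)
  · norm_num

set_option maxHeartbeats 2000000 in
lemma th_sym (N : ℕ) (hN : 3 ≤ N) (l : ℝ) (hl : l ∈ Set.Ioo (-1:ℝ) 1)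
    (i j : Fin N) :
    th N l i * Ham N l i j = th N l j * Ham N l j i := by
  obtain ⟨hl1, hl2⟩ := hl
  have h1 : (1:ℝ) + l ≠ 0 := by linarith
  have hi := i.isLt
  have hj := j.isLt
  simp only [Ham, Matrix.of_apply, th]
  split_ifs <;> first | omega | (field_simp; try ring)

theorem stmt5 (N : ℕ) (hN : 3 ≤ N) (l : ℝ) (hl : l ∈ Set.Ioo (-1 : ℝ) 1) :
    ∀ z : ℂ, ((Ham N l).map Complex.ofReal).charpoly.IsRoot z → z.im = 0 := by
  intro z hz
  set A : Matrix (Fin N) (Fin N) ℂ := (Ham N l).map Complex.ofReal with hA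
  -- det (z•1 - A) = 0
  have hdet : det (z • (1 : Matrix (Fin N) (Fin N) ℂ) - A) = 0 := by
    have hmap : (A.charmatrix).map (evalRingHom z) = z • (1 : Matrix (Fin N) (Fin N) ℂ) - A := by
      ext i j
      by_cases h : i = j <;>
        simp [charmatrix_apply, h, Matrix.one_apply, Matrix.diagonal_apply]
    have h2 := hz
    rw [Polynomial.IsRoot, Matrix.charpoly, ← coe_evalRingHom, RingHom.map_det,
      RingHom.mapMatrix_apply, hmap] at h2
    exact h2
  -- eigenvector
  obtain ⟨v, hv0, hv⟩ := (Matrix.exists_mulVec_eq_zero_iff).2 hdet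
  have heig : A *ᵥ v = z • v := by
    rw [Matrix.sub_mulVec, Matrix.smul_mulVec, Matrix.one_mulVec, sub_eq_zero] at hv
    exact hv.symm
  -- metric
  set Θ : Matrix (Fin N) (Fin N) ℂ := Matrix.diagonal (fun i => (th N l i : ℂ)) with hΘ
  set B : Matrix (Fin N) (Fin N) ℂ := Θ * A with hB
  have hherm : Bᴴ = B := by
    ext i j
    have hs := th_sym N hN l hl j i
    simp only [hB, conjTranspose_apply, Matrix.diagonal_mul, hΘ, hA, Matrix.map_apply,
      star_mul', RCLike.star_def, Complex.conj_ofReal]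
    exact_mod_cast hs
  set c : ℂ := star v ⬝ᵥ (Θ *ᵥ v) with hc
  -- c is a positive real
  have hcval : c = ((∑ i : Fin N, th N l (i : ℕ) * Complex.normSq (v i) : ℝ) : ℂ) := by
    rw [hc, dotProduct, Complex.ofReal_sum]
    refine Finset.sum_congr rfl fun i _ => ?_
    simp only [hΘ, Matrix.mulVec_diagonal, Pi.star_apply, RCLike.star_def]
    rw [Complex.ofReal_mul, ← Complex.mul_conj]
    ring
  have hcpos : 0 < ∑ i : Fin N, th N l (i : ℕ) * Complex.normSq (v i) := by
    obtain ⟨i0, hi0⟩ := Function.ne_iff.1 hv0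
    refine Finset.sum_pos' (fun i _ => ?_) ⟨i0, Finset.mem_univ _, ?_⟩
    · exact mul_nonneg (th_pos N l hl i).le (Complex.normSq_nonneg _)
    · exact mul_pos (th_pos N l hl i0) (Complex.normSq_pos.2 (by simpa using hi0))
  have hcne : c ≠ 0 := by
    rw [hcval]
    exact_mod_cast hcpos.ne'
  have hcstar : star c = c := by rw [hcval]; exact Complex.conj_ofReal _
  -- quadratic form
  have hQ : star v ⬝ᵥ (B *ᵥ v) = z * c := by
    rw [hB, ← Matrix.mulVec_mulVec, heig, Matrix.mulVec_smul, dotProduct_smul,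
      hc, smul_eq_mul]
  have hq2 : star (star v ⬝ᵥ (B *ᵥ v)) = star v ⬝ᵥ (B *ᵥ v) := by
    conv_lhs => rw [Matrix.star_dotProduct, star_star, Matrix.star_mulVec, hherm]
    rw [← Matrix.dotProduct_mulVec]
  rw [hQ, star_mul', hcstar] at hq2
  have hzz : star z = z := mul_right_cancel₀ hcne hq2
  rw [Complex.star_def] at hzz
  exact Complex.conj_eq_iff_im.1 hzz
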